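/- Let a = N_T/(1+N_T), b = N_S(N_T-η+1)/((1+N_S)(1+N_T)), c² = η N_S/((1+N_T)²(1+N_S)), d = 1/((1+N_T)(1+N_S)), z = η/((N_T-η+1)N_T), and α = (a/(1-a))(b/(1-b))z, where 0 < η ≤ 1, N_S > 0, N_T > η. Then for every integer Δ ≥ 1, (d/((1-a)(1-b))) · (c²/((1-a)(1-b)))^Δ · (1-α)^{-Δ-1} = (η N_S/(1+N_T))^Δ. -/

import Mathlib

theorem stmt7 (η NS NT : ℝ) (hη0 : 0 < η) (hη1 : η ≤ 1) (hNS : 0 < NS) (hNT : η < NT)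
    (Δ : ℕ) (hΔ : 1 ≤ Δ) :
    let a := NT / (1 + NT)
    let b := NS * (NT - η + 1) / ((1 + NS) * (1 + NT))
    let c2 := η * NS / ((1 + NT) ^ 2 * (1 + NS))
    let d := 1 / ((1 + NT) * (1 + NS))
    let z := η / ((NT - η + 1) * NT)
    let α := (a / (1 - a)) * (b / (1 - b)) * z
    d / ((1 - a) * (1 - b)) * (c2 / ((1 - a) * (1 - b))) ^ Δ * (1 - α) ^ (-(Δ : ℤ) - 1)
      = (η * NS / (1 + NT)) ^ Δ := by
  intro a b c2 d z α
  have hNT0 : (0:ℝ) < NT := lt_trans hη0 hNT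
  have hT : (0:ℝ) < 1 + NT := by linarith
  have hS : (0:ℝ) < 1 + NS := by linarith
  have hE : (0:ℝ) < NT - η + 1 := by linarith
  have hK : (0:ℝ) < 1 + NT + NS * η := by nlinarith
  have hT' : (1 + NT) ≠ 0 := ne_of_gt hT
  have hS' : (1 + NS) ≠ 0 := ne_of_gt hS
  have hE' : (NT - η + 1) ≠ 0 := ne_of_gt hE
  have hK' : (1 + NT + NS * η) ≠ 0 := ne_of_gt hK
  have hNT0' : NT ≠ 0 := ne_of_gt hNT0
  have ha : 1 - a = 1 / (1 + NT) := by
    show 1 - NT / (1 + NT) = _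
    field_simp
    ring
  have hb : 1 - b = (1 + NT + NS * η) / ((1 + NS) * (1 + NT)) := by
    show 1 - NS * (NT - η + 1) / ((1 + NS) * (1 + NT)) = _
    field_simp
    ring
  have hα : 1 - α = (1 + NT) / (1 + NT + NS * η) := by
    show 1 - (a / (1 - a)) * (b / (1 - b)) * z = _
    rw [ha, hb]
    show 1 - (NT / (1 + NT) / (1 / (1 + NT))) *
        (NS * (NT - η + 1) / ((1 + NS) * (1 + NT)) /
          ((1 + NT + NS * η) / ((1 + NS) * (1 + NT)))) *
        (η / ((NT - η + 1) * NT)) = _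
    field_simp
    ring
  have hd : d / ((1 - a) * (1 - b)) = (1 + NT) / (1 + NT + NS * η) := by
    rw [ha, hb]
    show 1 / ((1 + NT) * (1 + NS)) / _ = _
    field_simp
  have hc : c2 / ((1 - a) * (1 - b)) = η * NS / (1 + NT + NS * η) := by
    rw [ha, hb]
    show η * NS / ((1 + NT) ^ 2 * (1 + NS)) / _ = _
    field_simp
  rw [hd, hc, hα]
  have hpow : ((1 + NT) / (1 + NT + NS * η)) ^ (-(Δ : ℤ) - 1)
      = ((1 + NT + NS * η) / (1 + NT)) ^ (Δ + 1) := by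
    have : (-(Δ : ℤ) - 1) = -((Δ : ℤ) + 1) := by ring
    rw [this, zpow_neg, ← inv_zpow, inv_div]
    rw [show ((Δ : ℤ) + 1) = ((Δ + 1 : ℕ) : ℤ) by push_cast; ring, zpow_natCast]
  rw [hpow, pow_succ]
  rw [div_pow, div_pow, div_pow]
  field_simp
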